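/- Every invertible n×n real matrix g can be written as g = u·d·k, where u is upper unitriangular, d is diagonal with strictly positive diagonal entries, and k is orthogonal. -/

import Mathlib

open Matrix

lemma posDef_conj_aux {α : Type*} [Fintype α] [DecidableEq α]
    {S B : Matrix α α ℝ} (hS : S.PosDef) (hB : IsUnit B.det) :
    (B * S * Bᴴ).PosDef := by
  haveI : Invertible B := B.invertibleOfIsUnitDet hB
  have hBt : Bᴴ = Bᵀ := by ext i j; simp [conjTranspose_apply]
  refine PosDef.of_dotProduct_mulVec_pos (isHermitian_mul_mul_conjTranspose B hS.1) fun x hx => ?_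
  rw [hBt]
  have hy : Bᵀ *ᵥ x ≠ 0 := by
    intro h
    haveI : Invertible Bᵀ := B.invertibleTranspose
    exact hx (mulVec_injective_of_invertible Bᵀ (h.trans (mulVec_zero Bᵀ).symm))
  have hpos := hS.dotProduct_mulVec_pos hy
  calc star x ⬝ᵥ ((B * S * Bᵀ) *ᵥ x)
      = x ⬝ᵥ (B *ᵥ (S *ᵥ (Bᵀ *ᵥ x))) := by rw [star_trivial, ← mulVec_mulVec, ← mulVec_mulVec]
    _ = (x ᵥ* B) ⬝ᵥ (S *ᵥ (Bᵀ *ᵥ x)) := dotProduct_mulVec _ _ _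
    _ = star (Bᵀ *ᵥ x) ⬝ᵥ (S *ᵥ (Bᵀ *ᵥ x)) := by rw [star_trivial, mulVec_transpose]
    _ > 0 := hpos

def UniUpper {k : ℕ} (u : Matrix (Fin k) (Fin k) ℝ) : Prop :=
  (∀ i j : Fin k, j < i → u i j = 0) ∧ (∀ i : Fin k, u i i = 1)

theorem stmt17 {n : ℕ} (g : Matrix (Fin n) (Fin n) ℝ) (hg : IsUnit g.det) :
    ∃ (u k : Matrix (Fin n) (Fin n) ℝ) (f : Fin n → ℝ),
      UniUpper u ∧ (∀ i, 0 < f i) ∧ kᵀ * k = 1 ∧ g = u * Matrix.diagonal f * k := by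
  rcases n with _ | m
  · exact ⟨1, 1, fun _ => 1, ⟨fun i => i.elim0, fun i => i.elim0⟩, fun i => one_pos,
      by ext i; exact i.elim0, by ext i; exact i.elim0⟩
  -- work in the order-dual world
  set g' : Matrix (Fin (m + 1))ᵒᵈ (Fin (m + 1))ᵒᵈ ℝ :=
    show Matrix (Fin (m + 1))ᵒᵈ (Fin (m + 1))ᵒᵈ ℝ from g with hg'def
  have hΦg : g'.submatrix (OrderDual.toDual : Fin (m + 1) → (Fin (m + 1))ᵒᵈ)
      (OrderDual.toDual : Fin (m + 1) → (Fin (m + 1))ᵒᵈ) = g := by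
    ext a b; rfl
  have hgd' : IsUnit g'.det := by
    have h := Matrix.det_submatrix_equiv_self
      (OrderDual.toDual : Fin (m + 1) ≃ (Fin (m + 1))ᵒᵈ) g'
    rw [hΦg] at h
    rwa [← h]
  have hS : (g' * g'ᵀ).PosDef := by
    have h := posDef_conj_aux
      (S := (1 : Matrix (Fin (m + 1))ᵒᵈ (Fin (m + 1))ᵒᵈ ℝ)) Matrix.PosDef.one hgd'
    have hgt : g'ᴴ = g'ᵀ := by ext i j; simp [conjTranspose_apply]
    rwa [Matrix.mul_one, hgt] at h
  haveI : WellFoundedLT (Fin (m + 1))ᵒᵈ := Finite.to_wellFoundedLT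
  haveI := LDL.invertibleLowerInv hS
  set L := LDL.lower hS with hLdef
  set W := LDL.lowerInv hS with hWdef
  set δ := LDL.diagEntries hS with hδdef
  have hWtri : ∀ i j : (Fin (m + 1))ᵒᵈ, i < j → W i j = 0 :=
    fun i j h => LDL.lowerInv_triangular hS h
  have hLtri : ∀ i j : (Fin (m + 1))ᵒᵈ, i < j → L i j = 0 := by
    have h1 : BlockTriangular W (OrderDual.ofDual (α := Fin (m + 1))) :=
      fun i j hij => hWtri i j hij
    have h2 := blockTriangular_inv_of_blockTriangular h1
    exact fun i j hij => h2 hij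
  have hLW : L * W = 1 := Matrix.inv_mul_of_invertible W
  have hdiagL : ∀ i, L i i ≠ 0 := by
    intro i h
    have h1 : (L * W) i i = 1 := by rw [hLW]; simp
    rw [mul_apply, Finset.sum_eq_single i] at h1
    · rw [h, zero_mul] at h1; exact zero_ne_one h1
    · intro c _ hc
      rcases lt_or_gt_of_ne hc with hlt | hgt
      · exact mul_eq_zero_of_right _ (hWtri c i hlt)
      · exact mul_eq_zero_of_left (hLtri i c hgt) _
    · exact fun hc => absurd (Finset.mem_univ i) hc
  have hδpos : ∀ i, 0 < δ i := by
    have h1 : (LDL.diag hS).PosDef := by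
      rw [LDL.diag_eq_lowerInv_conj hS]
      exact posDef_conj_aux hS (Matrix.isUnit_det_of_invertible _)
    exact fun i => (Matrix.posDef_diagonal_iff.mp h1) i
  have hfact : g' * g'ᵀ = L * Matrix.diagonal δ * Lᵀ := by
    have h := LDL.lower_conj_diag hS
    have hct : Lᴴ = Lᵀ := by ext i j; simp [conjTranspose_apply]
    rw [hct] at h
    exact h.symm
  -- build u, f, A in the dual world
  set u := L * Matrix.diagonal (fun i => (L i i)⁻¹) with hudef
  have huL : u * Matrix.diagonal (fun i => L i i) = L := by
    rw [hudef, Matrix.mul_assoc, diagonal_mul_diagonal]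
    have h : (fun i => (L i i)⁻¹ * L i i) = fun _ => (1 : ℝ) := by
      funext i; exact inv_mul_cancel₀ (hdiagL i)
    rw [h, diagonal_one, Matrix.mul_one]
  have hutri : ∀ i j : (Fin (m + 1))ᵒᵈ, i < j → u i j = 0 := by
    intro i j h
    rw [hudef, mul_diagonal, hLtri i j h, zero_mul]
  have hudiag : ∀ i, u i i = 1 := by
    intro i
    rw [hudef, mul_diagonal, mul_inv_cancel₀ (hdiagL i)]
  set f : (Fin (m + 1))ᵒᵈ → ℝ := fun i => Real.sqrt (L i i ^ 2 * δ i) with hfdef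
  have hfpos : ∀ i, 0 < f i := fun i =>
    Real.sqrt_pos.mpr (mul_pos (pow_two_pos_of_ne_zero (hdiagL i)) (hδpos i))
  have hff : ∀ i, f i * f i = L i i ^ 2 * δ i := fun i =>
    Real.mul_self_sqrt (le_of_lt (mul_pos (pow_two_pos_of_ne_zero (hdiagL i)) (hδpos i)))
  set A := u * Matrix.diagonal f with hAdef
  have hAAT : A * Aᵀ = g' * g'ᵀ := by
    have hd : Matrix.diagonal f * Matrix.diagonal f =
        Matrix.diagonal (fun i => L i i) * Matrix.diagonal δ
          * Matrix.diagonal (fun i => L i i) := by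
      rw [diagonal_mul_diagonal, diagonal_mul_diagonal, diagonal_mul_diagonal]
      have h0 : (fun i => f i * f i) = fun i => L i i * δ i * L i i := by
        funext i; rw [hff i]; ring
      rw [h0]
    calc A * Aᵀ = u * (Matrix.diagonal f * Matrix.diagonal f) * uᵀ := by
          rw [hAdef, transpose_mul, diagonal_transpose]
          simp only [Matrix.mul_assoc]
      _ = u * (Matrix.diagonal (fun i => L i i) * Matrix.diagonal δ
            * Matrix.diagonal (fun i => L i i)) * uᵀ := by rw [hd]
      _ = (u * Matrix.diagonal (fun i => L i i)) * Matrix.diagonal δ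
            * (u * Matrix.diagonal (fun i => L i i))ᵀ := by
          rw [transpose_mul u (Matrix.diagonal (fun i => L i i)), diagonal_transpose]
          simp only [Matrix.mul_assoc]
      _ = L * Matrix.diagonal δ * Lᵀ := by rw [huL]
      _ = g' * g'ᵀ := hfact.symm
  have hAdet : IsUnit A.det := by
    rw [isUnit_iff_ne_zero]
    intro h
    have h2 := congrArg Matrix.det hAAT
    rw [det_mul A Aᵀ, det_mul g' g'ᵀ, det_transpose A, det_transpose g', h, mul_zero] at h2
    exact hgd'.ne_zero (mul_self_eq_zero.mp h2.symm)
  set K := A⁻¹ * g' with hKdef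
  have hgtd' : IsUnit g'ᵀ.det := by rwa [det_transpose]
  have hK1 : Kᵀ * K = 1 := by
    rw [hKdef, transpose_mul, transpose_nonsing_inv]
    calc g'ᵀ * (Aᵀ)⁻¹ * (A⁻¹ * g') = g'ᵀ * ((Aᵀ)⁻¹ * A⁻¹) * g' := by
          simp only [Matrix.mul_assoc]
      _ = g'ᵀ * (A * Aᵀ)⁻¹ * g' := by rw [← Matrix.mul_inv_rev A Aᵀ]
      _ = g'ᵀ * (g' * g'ᵀ)⁻¹ * g' := by rw [hAAT]
      _ = g'ᵀ * (g'ᵀ⁻¹ * g'⁻¹) * g' := by rw [Matrix.mul_inv_rev g' g'ᵀ]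
      _ = (g'ᵀ * g'ᵀ⁻¹) * (g'⁻¹ * g') := by simp only [Matrix.mul_assoc]
      _ = 1 := by
          rw [Matrix.mul_nonsing_inv _ hgtd', Matrix.nonsing_inv_mul _ hgd', Matrix.mul_one]
  have hgUDK : g' = u * Matrix.diagonal f * K := by
    rw [hKdef, ← hAdef, ← Matrix.mul_assoc, Matrix.mul_nonsing_inv _ hAdet, Matrix.one_mul]
  -- transfer back to Fin (m+1)
  set e : Fin (m + 1) ≃ (Fin (m + 1))ᵒᵈ := OrderDual.toDual with hedef
  refine ⟨u.submatrix e e, K.submatrix e e, fun a => f (e a), ?_, fun a => hfpos _, ?_, ?_⟩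
  · constructor
    · intro a b h
      exact hutri (e a) (e b) h
    · intro a
      exact hudiag (e a)
  · calc (K.submatrix e e)ᵀ * K.submatrix e e
        = Kᵀ.submatrix e e * K.submatrix e e := by rw [transpose_submatrix]
      _ = (Kᵀ * K).submatrix e e := submatrix_mul_equiv _ _ _ _ _
      _ = 1 := by rw [hK1, submatrix_one_equiv]
  · calc g = g'.submatrix e e := hΦg.symm
      _ = (u * Matrix.diagonal f * K).submatrix e e := by rw [← hgUDK]
      _ = (u * Matrix.diagonal f).submatrix e e * K.submatrix e e :=
          (submatrix_mul_equiv (u * Matrix.diagonal f) K e e e).symm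
      _ = u.submatrix e e * (Matrix.diagonal f).submatrix e e * K.submatrix e e := by
          rw [submatrix_mul_equiv u (Matrix.diagonal f) e e e]
      _ = u.submatrix e e * Matrix.diagonal (fun a => f (e a)) * K.submatrix e e := by
          rw [submatrix_diagonal_equiv]
          rfl
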